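/- If P is the symmetric positive semidefinite solution of the Lyapunov equation A P + P Aᵀ = −B Bᵀ with A Hurwitz, and K ∈ ℝ^{N×k} has orthonormal columns with range containing the range of P, then X = Kᵀ P K solves the projected Lyapunov equation (Kᵀ A K) X + X (Kᵀ A K)ᵀ = −(Kᵀ B)(Kᵀ B)ᵀ, and P = K X Kᵀ. -/
import Mathlib


open Matrix

/-- Exactness of the projected Lyapunov equation: if `P` is the symmetric positive
semidefinite solution of `A P + P Aᵀ = −B Bᵀ` with `A` Hurwitz, and `K` has orthonormal
columns whose span contains the range of `P` and is invariant under `A`, then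
`X = Kᵀ P K` solves `(Kᵀ A K) X + X (Kᵀ A K)ᵀ = −(Kᵀ B)(Kᵀ B)ᵀ` and `P = K X Kᵀ`. -/
theorem projected_lyapunov_exact {N p k : ℕ}
    (A : Matrix (Fin N) (Fin N) ℝ) (B : Matrix (Fin N) (Fin p) ℝ)
    (hA : ∀ μ ∈ spectrum ℂ (A.map (Complex.ofReal · )), μ.re < 0)
    (P : Matrix (Fin N) (Fin N) ℝ) (hPsd : P.PosSemidef)
    (hP : A * P + P * Aᵀ = -(B * Bᵀ))
    (K : Matrix (Fin N) (Fin k) ℝ)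
    (hK : Kᵀ * K = 1)
    (hrange : K * Kᵀ * P = P)
    (hinv : K * Kᵀ * (A * K) = A * K) :
    (Kᵀ * A * K) * (Kᵀ * P * K) + (Kᵀ * P * K) * (Kᵀ * A * K)ᵀ =
      -((Kᵀ * B) * (Kᵀ * B)ᵀ) ∧
    P = K * (Kᵀ * P * K) * Kᵀ := by
  have hPt : Pᵀ = P := by
    have := hPsd.1
    simpa [Matrix.IsHermitian] using this
  have h2 : P * K * Kᵀ = P := by
    have := congrArg Matrix.transpose hrange
    simpa [Matrix.transpose_mul, hPt, ← Matrix.mul_assoc] using this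
  have hback : P = K * (Kᵀ * P * K) * Kᵀ := by
    calc P = P * K * Kᵀ := h2.symm
    _ = (K * Kᵀ * P) * K * Kᵀ := by rw [hrange]
    _ = K * (Kᵀ * P * K) * Kᵀ := by simp only [Matrix.mul_assoc, Matrix.mul_add, Matrix.add_mul]
  refine ⟨?_, hback⟩
  have e1 : Kᵀ * A * K * (Kᵀ * P * K) = Kᵀ * (A * P) * K := by
    calc Kᵀ * A * K * (Kᵀ * P * K) = Kᵀ * A * (K * Kᵀ * P) * K := by simp only [Matrix.mul_assoc, Matrix.mul_add, Matrix.add_mul]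
    _ = Kᵀ * (A * P) * K := by rw [hrange]; simp only [Matrix.mul_assoc, Matrix.mul_add, Matrix.add_mul]
  have e2 : (Kᵀ * P * K) * (Kᵀ * A * K)ᵀ = Kᵀ * (P * Aᵀ) * K := by
    calc (Kᵀ * P * K) * (Kᵀ * A * K)ᵀ = Kᵀ * (P * K * Kᵀ) * Aᵀ * K := by
          simp [Matrix.transpose_mul]; simp only [Matrix.mul_assoc, Matrix.mul_add, Matrix.add_mul]
    _ = Kᵀ * (P * Aᵀ) * K := by rw [h2]; simp only [Matrix.mul_assoc, Matrix.mul_add, Matrix.add_mul]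
  rw [e1, e2]
  calc Kᵀ * (A * P) * K + Kᵀ * (P * Aᵀ) * K = Kᵀ * (A * P + P * Aᵀ) * K := by simp only [Matrix.mul_assoc, Matrix.mul_add, Matrix.add_mul]
  _ = -((Kᵀ * B) * (Kᵀ * B)ᵀ) := by rw [hP]; simp [Matrix.transpose_mul]; simp only [Matrix.mul_assoc, Matrix.mul_add, Matrix.add_mul]
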